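/- For all λ > 0 and γ ≥ 0, (2λ^{3/2}π/3) ∫₀^∞ ∫₀^∞ ∫₀^∞ λπ ĥ(t,h₁,h₂)² e^{−(γ + λπ) ĥ(t,h₁,h₂)²} dt dh₁ dh₂ = (1 + γ/(λπ))^{−5/2}, where ĥ(t,h₁,h₂)² := (1/4)[ t² + 2(h₁² + h₂²) + (h₂² − h₁²)²/t² ]. Equivalently, the Palm distribution of the typical tropical-interference handover distance H_{I'} is Nakagami with parameters (5/2, 5/(2λπ)), i.e. E[e^{−γ H_{I'}²}] = (1 + γ/(λπ))^{−5/2}. -/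

import Mathlib

open MeasureTheory Set


namespace Stmt8Aux

lemma gauss_int {c : ℝ} (hc : 0 < c) (k : ℕ) :
    Integrable (fun x : ℝ => x ^ k * Real.exp (-(c * x ^ 2))) := by
  have h := integrable_rpow_mul_exp_neg_mul_sq hc (s := k) (by
    have : (0:ℝ) ≤ k := Nat.cast_nonneg k
    linarith)
  have e : (fun x : ℝ => x ^ (k:ℝ) * Real.exp (-c * x ^ 2))
      = fun x : ℝ => x ^ k * Real.exp (-(c * x ^ 2)) := by
    funext x; rw [Real.rpow_natCast, neg_mul]
  rwa [e] at h

lemma gauss_val {c : ℝ} (hc : 0 < c) (k : ℕ) :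
    ∫ x in Ioi (0:ℝ), x ^ k * Real.exp (-(c * x ^ 2))
      = c ^ (-((k:ℝ)+1)/2) * (1/2) * Real.Gamma (((k:ℝ)+1)/2) := by
  rw [← integral_rpow_mul_exp_neg_mul_rpow two_pos
      (by have : (0:ℝ) ≤ k := Nat.cast_nonneg k; linarith : (-1:ℝ) < k) hc]
  refine setIntegral_congr_fun measurableSet_Ioi fun x hx => ?_
  have h2 : x ^ (2:ℝ) = x ^ (2:ℕ) := by
    rw [show (2:ℝ) = ((2:ℕ):ℝ) by norm_num, Real.rpow_natCast]
  rw [Real.rpow_natCast, h2, neg_mul]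

lemma Gamma_three_halves : Real.Gamma (3/2) = Real.sqrt Real.pi / 2 := by
  rw [show (3:ℝ)/2 = 1/2 + 1 by norm_num, Real.Gamma_add_one (by norm_num),
    Real.Gamma_one_half_eq]
  ring

lemma gv0 {c : ℝ} (hc : 0 < c) :
    ∫ x in Ioi (0:ℝ), Real.exp (-(c * x ^ 2)) = Real.sqrt Real.pi / 2 * c ^ (-(1:ℝ)/2) := by
  have h := gauss_val hc 0
  simp only [pow_zero, one_mul, Nat.cast_zero] at h
  rw [h, show -((0:ℝ)+1)/2 = -(1:ℝ)/2 by norm_num, show ((0:ℝ)+1)/2 = 1/2 by norm_num,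
    Real.Gamma_one_half_eq]
  ring

lemma gv2 {c : ℝ} (hc : 0 < c) :
    ∫ x in Ioi (0:ℝ), x ^ 2 * Real.exp (-(c * x ^ 2))
      = Real.sqrt Real.pi / 4 * c ^ (-(3:ℝ)/2) := by
  have h := gauss_val hc 2
  simp only [Nat.cast_ofNat] at h
  rw [h, show -((2:ℝ)+1)/2 = -(3:ℝ)/2 by norm_num, show ((2:ℝ)+1)/2 = 3/2 by norm_num,
    Gamma_three_halves]
  ring

lemma gv1 {c : ℝ} (hc : 0 < c) :
    ∫ x in Ioi (0:ℝ), x ^ 1 * Real.exp (-(c * x ^ 2)) = 1/2 * c ^ (-(1:ℝ)) := by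
  have h := gauss_val hc 1
  simp only [Nat.cast_one] at h
  rw [h, show -((1:ℝ)+1)/2 = -(1:ℝ) by norm_num, show ((1:ℝ)+1)/2 = 1 by norm_num,
    Real.Gamma_one]
  ring

lemma gv3 {c : ℝ} (hc : 0 < c) :
    ∫ x in Ioi (0:ℝ), x ^ 3 * Real.exp (-(c * x ^ 2)) = 1/2 * c ^ (-(2:ℝ)) := by
  have h := gauss_val hc 3
  simp only [Nat.cast_ofNat] at h
  rw [h, show -((3:ℝ)+1)/2 = -(2:ℝ) by norm_num, show ((3:ℝ)+1)/2 = 2 by norm_num,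
    Real.Gamma_two]
  ring

noncomputable def phi (c h : ℝ) : ℝ :=
  Real.sqrt Real.pi * Real.exp (-(c * h ^ 2)) *
    (c ^ (-(3:ℝ)/2) / 2 + h ^ 2 * c ^ (-(1:ℝ)/2))

lemma phi_nonneg {c : ℝ} (hc : 0 < c) (h : ℝ) : 0 ≤ phi c h := by
  unfold phi; positivity

lemma phi_decomp (c : ℝ) : (fun h : ℝ => phi c h)
    = fun h : ℝ => (Real.sqrt Real.pi * (c ^ (-(3:ℝ)/2) / 2)) * (h ^ 0 * Real.exp (-(c * h ^ 2)))
      + (Real.sqrt Real.pi * c ^ (-(1:ℝ)/2)) * (h ^ 2 * Real.exp (-(c * h ^ 2))) := by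
  funext h; simp only [phi, pow_zero, one_mul]; ring

lemma hphi_decomp (c : ℝ) : (fun h : ℝ => h * phi c h)
    = fun h : ℝ => (Real.sqrt Real.pi * (c ^ (-(3:ℝ)/2) / 2)) * (h ^ 1 * Real.exp (-(c * h ^ 2)))
      + (Real.sqrt Real.pi * c ^ (-(1:ℝ)/2)) * (h ^ 3 * Real.exp (-(c * h ^ 2))) := by
  funext h; simp only [phi, pow_one]; ring

lemma phi_integrable {c : ℝ} (hc : 0 < c) : Integrable (fun h : ℝ => phi c h) := by
  rw [phi_decomp]
  exact ((gauss_int hc 0).const_mul _).add ((gauss_int hc 2).const_mul _)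

lemma hphi_integrable {c : ℝ} (hc : 0 < c) : Integrable (fun h : ℝ => h * phi c h) := by
  rw [hphi_decomp]
  exact ((gauss_int hc 1).const_mul _).add ((gauss_int hc 3).const_mul _)

lemma phi_eq {c : ℝ} (hc : 0 < c) (h : ℝ) :
    2 * ∫ u in Ioi (0:ℝ), (u ^ 2 + h ^ 2) * Real.exp (-(c * (u ^ 2 + h ^ 2))) = phi c h := by
  have e : (fun u : ℝ => (u ^ 2 + h ^ 2) * Real.exp (-(c * (u ^ 2 + h ^ 2))))
      = fun u : ℝ => Real.exp (-(c * h ^ 2)) * (u ^ 2 * Real.exp (-(c * u ^ 2)))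
        + (Real.exp (-(c * h ^ 2)) * h ^ 2) * (u ^ 0 * Real.exp (-(c * u ^ 2))) := by
    funext u
    rw [show -(c * (u ^ 2 + h ^ 2)) = -(c * u ^ 2) + -(c * h ^ 2) by ring, Real.exp_add]
    ring
  rw [e, integral_add (((gauss_int hc 2).const_mul _).integrableOn)
    (((gauss_int hc 0).const_mul _).integrableOn),
    integral_const_mul, integral_const_mul, gv2 hc]
  have h0 : ∫ x in Ioi (0:ℝ), x ^ 0 * Real.exp (-(c * x ^ 2))
      = Real.sqrt Real.pi / 2 * c ^ (-(1:ℝ)/2) := by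
    rw [← gv0 hc]
    exact setIntegral_congr_fun measurableSet_Ioi fun x _ => by simp
  rw [h0]
  unfold phi
  ring

lemma hphi_val {c : ℝ} (hc : 0 < c) :
    ∫ h in Ioi (0:ℝ), h * phi c h = 3/4 * Real.sqrt Real.pi * c ^ (-(5:ℝ)/2) := by
  rw [hphi_decomp, integral_add (((gauss_int hc 1).const_mul _).integrableOn)
      (((gauss_int hc 3).const_mul _).integrableOn),
    integral_const_mul, integral_const_mul, gv1 hc, gv3 hc]
  have e1 : c ^ (-(3:ℝ)/2) * c ^ (-(1:ℝ)) = c ^ (-(5:ℝ)/2) := by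
    rw [← Real.rpow_add hc]; norm_num
  have e2 : c ^ (-(1:ℝ)/2) * c ^ (-(2:ℝ)) = c ^ (-(5:ℝ)/2) := by
    rw [← Real.rpow_add hc]; norm_num
  nlinarith [e1, e2, Real.sqrt_nonneg Real.pi]

noncomputable def Qf (t h₁ h₂ : ℝ) : ℝ :=
  1/4 * (t ^ 2 + 2 * (h₁ ^ 2 + h₂ ^ 2) + (h₂ ^ 2 - h₁ ^ 2) ^ 2 / t ^ 2)

lemma Qf_symm (t h₁ h₂ : ℝ) : Qf t h₁ h₂ = Qf t h₂ h₁ := by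
  unfold Qf; ring_nf

set_option maxHeartbeats 1000000 in
lemma inner_cov {c : ℝ} (hc : 0 < c) {h₁ h₂ : ℝ} (h1 : 0 < h₁) (h12 : h₁ < h₂) :
    ∫ t in Ioi (0:ℝ), Qf t h₁ h₂ * Real.exp (-(c * Qf t h₁ h₂)) =
      2 * ∫ u in Ioi (0:ℝ), (u ^ 2 + h₂ ^ 2) * Real.exp (-(c * (u ^ 2 + h₂ ^ 2))) := by
  set a : ℝ := h₂ ^ 2 - h₁ ^ 2 with ha_def
  have ha : 0 < a := by nlinarith
  have hpos : ∀ u : ℝ, 0 < u ^ 2 + a := fun u => by positivity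
  have hsqrt_pos : ∀ u : ℝ, 0 < Real.sqrt (u ^ 2 + a) := fun u => Real.sqrt_pos.mpr (hpos u)
  set ψ : ℝ → ℝ := fun u => u + Real.sqrt (u ^ 2 + a) with hψ_def
  set D : ℝ → ℝ := fun u => 1 + u / Real.sqrt (u ^ 2 + a) with hD_def
  have haux : ∀ u : ℝ, -u < Real.sqrt (u ^ 2 + a) := by
    intro u
    rcases le_or_gt 0 u with hu | hu
    · calc -u ≤ 0 := by linarith
        _ < _ := hsqrt_pos u
    · exact (Real.lt_sqrt (by linarith)).mpr (by nlinarith)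
  have hψ_pos : ∀ u : ℝ, 0 < ψ u := fun u => by have := haux u; simp only [hψ_def]; linarith
  have hD : ∀ u : ℝ, HasDerivAt ψ (D u) u := by
    intro u
    have hq : HasDerivAt (fun u : ℝ => u ^ 2 + a) (2 * u) u := by
      simpa using (hasDerivAt_pow 2 u).add_const a
    have hs : HasDerivAt (fun y : ℝ => Real.sqrt y) (1 / (2 * Real.sqrt (u ^ 2 + a))) (u ^ 2 + a) :=
      Real.hasDerivAt_sqrt (ne_of_gt (hpos u))
    have := (hs.comp u hq).const_add 0
    have h' : HasDerivAt (fun u : ℝ => Real.sqrt (u ^ 2 + a))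
        (u / Real.sqrt (u ^ 2 + a)) u := by
      have h2 := hs.comp u hq
      rw [show u / Real.sqrt (u ^ 2 + a) = 1 / (2 * Real.sqrt (u ^ 2 + a)) * (2 * u) by ring]
      exact h2
    exact (hasDerivAt_id' u).add h'
  have hD_pos : ∀ u : ℝ, 0 < D u := by
    intro u
    have h := haux u
    have hs := hsqrt_pos u
    have : 0 < 1 + u / Real.sqrt (u ^ 2 + a) := by
      rw [show (1:ℝ) + u / Real.sqrt (u ^ 2 + a)
          = (Real.sqrt (u ^ 2 + a) + u) / Real.sqrt (u ^ 2 + a) by field_simp]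
      apply div_pos (by linarith) hs
    simpa [hD_def]
  have hψ_mono : StrictMono ψ := by
    apply strictMono_of_deriv_pos
    intro u
    rw [(hD u).deriv]
    exact hD_pos u
  have himage : Ioi (0:ℝ) = ψ '' univ := by
    ext t
    constructor
    · intro ht
      have ht' : (0:ℝ) < t := ht
      refine ⟨(t - a/t)/2, trivial, ?_⟩
      have hkey : ((t - a/t)/2) ^ 2 + a = ((t + a/t)/2) ^ 2 := by
        field_simp
        ring
      have hpos2 : 0 < (t + a/t)/2 := by positivity
      simp only [hψ_def]
      rw [hkey, Real.sqrt_sq hpos2.le]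
      field_simp
      ring
    · rintro ⟨u, -, rfl⟩
      exact hψ_pos u
  have hQψ : ∀ u : ℝ, Qf (ψ u) h₁ h₂ = u ^ 2 + h₂ ^ 2 := by
    intro u
    have hs2 : Real.sqrt (u ^ 2 + a) ^ 2 = u ^ 2 + a := Real.sq_sqrt (hpos u).le
    set s := Real.sqrt (u ^ 2 + a) with hs_def
    have htpos : 0 < u + s := hψ_pos u
    have htne : u + s ≠ 0 := ne_of_gt htpos
    have ht2 : (u + s) ^ 2 - 2 * u * (u + s) - a = 0 := by linear_combination hs2
    show Qf (u + s) h₁ h₂ = u ^ 2 + h₂ ^ 2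
    unfold Qf
    rw [ha_def] at ht2
    field_simp
    linear_combination ((u+s)^2 + 2*u*(u+s) - (h₂^2 - h₁^2)) * ht2
  set Ft : ℝ → ℝ := fun u => (u ^ 2 + h₂ ^ 2) * Real.exp (-(c * (u ^ 2 + h₂ ^ 2))) with hFt_def
  have hFt_int : Integrable Ft := by
    have e : Ft = fun u => Real.exp (-(c * h₂ ^ 2)) * (u ^ 2 * Real.exp (-(c * u ^ 2)))
        + (Real.exp (-(c * h₂ ^ 2)) * h₂ ^ 2) * (u ^ 0 * Real.exp (-(c * u ^ 2))) := by
      funext u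
      simp only [hFt_def, pow_zero, one_mul]
      rw [show -(c * (u ^ 2 + h₂ ^ 2)) = -(c * u ^ 2) + -(c * h₂ ^ 2) by ring, Real.exp_add]
      ring
    rw [e]
    exact ((gauss_int hc 2).const_mul _).add ((gauss_int hc 0).const_mul _)
  have hFt_nonneg : ∀ u, 0 ≤ Ft u := fun u => by
    simp only [hFt_def]; positivity
  set W : ℝ → ℝ := fun u => D u * Ft u with hW_def
  have hD_le : ∀ u : ℝ, D u ≤ 2 := by
    intro u
    have hs := hsqrt_pos u
    have hu : u ≤ Real.sqrt (u ^ 2 + a) := by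
      nlinarith [Real.sq_sqrt (hpos u).le, hsqrt_pos u, haux u]
    have : u / Real.sqrt (u ^ 2 + a) ≤ 1 := (div_le_one hs).mpr hu
    simp only [hD_def]; linarith
  have hW_cont : Continuous W := by
    have hcs : Continuous fun u : ℝ => Real.sqrt (u ^ 2 + a) :=
      Real.continuous_sqrt.comp (by continuity)
    have hcD : Continuous D := by
      apply Continuous.add continuous_const
      exact continuous_id.div hcs fun u => ne_of_gt (hsqrt_pos u)
    exact hcD.mul (by continuity)
  have hW_int : Integrable W := by
    refine Integrable.mono' (hFt_int.const_mul 2) hW_cont.aestronglyMeasurable ?_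
    refine Filter.Eventually.of_forall fun u => ?_
    have h1 : 0 ≤ W u := mul_nonneg (hD_pos u).le (hFt_nonneg u)
    rw [Real.norm_of_nonneg h1]
    simp only [hW_def]
    calc D u * Ft u ≤ 2 * Ft u := mul_le_mul_of_nonneg_right (hD_le u) (hFt_nonneg u)
      _ = 2 * Ft u := rfl
  have step1 : ∫ t in Ioi (0:ℝ), Qf t h₁ h₂ * Real.exp (-(c * Qf t h₁ h₂)) = ∫ u : ℝ, W u := by
    rw [himage, integral_image_eq_integral_abs_deriv_smul MeasurableSet.univ
      (fun u _ => (hD u).hasDerivWithinAt) (hψ_mono.injective.injOn) _,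
      Measure.restrict_univ]
    congr 1
    funext u
    rw [smul_eq_mul, abs_of_pos (hD_pos u), hQψ u]
  have hWn_int : Integrable (fun u : ℝ => W (-u)) := hW_int.comp_neg
  have step2 : (∫ u : ℝ, W u) = ∫ u in Ioi (0:ℝ), (W (-u) + W u) := by
    have h : (∫ u in Ioi (0:ℝ), W (-u)) = ∫ u in Iic (0:ℝ), W u := by
      have h0 := integral_comp_neg_Ioi (0:ℝ) W
      rwa [neg_zero] at h0
    calc (∫ u : ℝ, W u)
        = (∫ u in Iic (0:ℝ), W u) + ∫ u in Ioi (0:ℝ), W u :=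
          (intervalIntegral.integral_Iic_add_Ioi hW_int.integrableOn hW_int.integrableOn).symm
      _ = (∫ u in Ioi (0:ℝ), W (-u)) + ∫ u in Ioi (0:ℝ), W u := by rw [h]
      _ = ∫ u in Ioi (0:ℝ), (W (-u) + W u) :=
          (integral_add hWn_int.integrableOn hW_int.integrableOn).symm
  have step3 : ∀ u : ℝ, W (-u) + W u = 2 * Ft u := by
    intro u
    have hs := hsqrt_pos u
    simp only [hW_def, hD_def, neg_sq, hFt_def]
    field_simp
    ring
  calc ∫ t in Ioi (0:ℝ), Qf t h₁ h₂ * Real.exp (-(c * Qf t h₁ h₂))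
      = ∫ u : ℝ, W u := step1
    _ = ∫ u in Ioi (0:ℝ), (W (-u) + W u) := step2
    _ = ∫ u in Ioi (0:ℝ), 2 * Ft u := by
        exact setIntegral_congr_fun measurableSet_Ioi fun u _ => step3 u
    _ = 2 * ∫ u in Ioi (0:ℝ), Ft u := by rw [integral_const_mul]


lemma inner_eq {c : ℝ} (hc : 0 < c) {h₁ h₂ : ℝ} (h1 : 0 < h₁) (h2 : 0 < h₂) (hne : h₁ ≠ h₂) :
    ∫ t in Ioi (0:ℝ), Qf t h₁ h₂ * Real.exp (-(c * Qf t h₁ h₂)) = phi c (max h₁ h₂) := by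
  rcases lt_or_gt_of_ne hne with h | h
  · rw [inner_cov hc h1 h, max_eq_right h.le]
    exact phi_eq hc h₂
  · rw [show (fun t : ℝ => Qf t h₁ h₂ * Real.exp (-(c * Qf t h₁ h₂)))
        = (fun t : ℝ => Qf t h₂ h₁ * Real.exp (-(c * Qf t h₂ h₁))) from
      funext fun t => by rw [Qf_symm]]
    rw [inner_cov hc h2 h, max_eq_left h.le]
    exact phi_eq hc h₁

lemma middle {c : ℝ} (hc : 0 < c) {h₂ : ℝ} (h2 : 0 < h₂) :
    (∫ h₁ in Ioi (0:ℝ), ∫ t in Ioi (0:ℝ), Qf t h₁ h₂ * Real.exp (-(c * Qf t h₁ h₂)))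
      = h₂ * phi c h₂ + ∫ h₁ in Ioi h₂, phi c h₁ := by
  have hi1 : IntegrableOn (fun h₁ : ℝ => phi c (max h₁ h₂)) (Ioc 0 h₂) := by
    refine IntegrableOn.congr_fun (f := fun _ => phi c h₂)
      (integrableOn_const measure_Ioc_lt_top.ne)
      (fun h₁ hmem => ?_) measurableSet_Ioc
    rw [max_eq_right hmem.2]
  have hi2 : IntegrableOn (fun h₁ : ℝ => phi c (max h₁ h₂)) (Ioi h₂) := by
    refine ((phi_integrable hc).integrableOn.mono_set (Ioi_subset_Ioi h2.le)).congr_fun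
      (fun h₁ hmem => ?_) measurableSet_Ioi
    rw [max_eq_left (le_of_lt hmem)]
  have hstep : (∫ h₁ in Ioi (0:ℝ), ∫ t in Ioi (0:ℝ), Qf t h₁ h₂ * Real.exp (-(c * Qf t h₁ h₂)))
      = ∫ h₁ in Ioi (0:ℝ), phi c (max h₁ h₂) := by
    refine setIntegral_congr_ae measurableSet_Ioi ?_
    have hne : ∀ᵐ x : ℝ, x ≠ h₂ := by
      rw [ae_iff]
      simp only [ne_eq, not_not, setOf_eq_eq_singleton]
      exact measure_singleton h₂
    filter_upwards [hne] with h₁ hne1 hmem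
    exact inner_eq hc hmem h2 hne1
  rw [hstep, ← Ioc_union_Ioi_eq_Ioi h2.le,
    setIntegral_union (Ioc_disjoint_Ioi le_rfl) measurableSet_Ioi hi1 hi2]
  congr 1
  · rw [setIntegral_congr_fun measurableSet_Ioc
      (fun h₁ hmem => by rw [max_eq_right hmem.2] : EqOn _ (fun _ => phi c h₂) _),
      setIntegral_const, Real.volume_real_Ioc_of_le h2.le, smul_eq_mul]
    ring
  · exact setIntegral_congr_fun measurableSet_Ioi fun h₁ hmem => by
      rw [max_eq_left (le_of_lt hmem)]

lemma phi_measurable (c : ℝ) : Measurable (phi c) := by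
  unfold phi
  fun_prop

lemma swap_tail {c : ℝ} (hc : 0 < c) :
    (∫ h₂ in Ioi (0:ℝ), ∫ h in Ioi h₂, phi c h) = ∫ h in Ioi (0:ℝ), h * phi c h := by
  set T : ℝ → ℝ := fun h₂ => ∫ h in Ioi h₂, phi c h with hT_def
  have hT_nonneg : ∀ h₂, 0 ≤ T h₂ := fun h₂ =>
    setIntegral_nonneg measurableSet_Ioi fun h _ => phi_nonneg hc h
  have hT_anti : Antitone T := by
    intro x y hxy
    exact setIntegral_mono_set (phi_integrable hc).integrableOn
      (Filter.Eventually.of_forall fun h => phi_nonneg hc h)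
      (HasSubset.Subset.eventuallyLE (Ioi_subset_Ioi hxy))
  have hT_meas : Measurable T := hT_anti.measurable
  have key : ∀ h₂ : ℝ, ENNReal.ofReal (T h₂)
      = ∫⁻ h in Ioi h₂, ENNReal.ofReal (phi c h) := fun h₂ =>
    ofReal_integral_eq_lintegral_ofReal (phi_integrable hc).integrableOn
      (Filter.Eventually.of_forall fun h => phi_nonneg hc h)
  have hmeas2 : Measurable (Function.uncurry fun (h₂ h : ℝ) =>
      (Ioi h₂).indicator (fun h => ENNReal.ofReal (phi c h)) h) := by
    have : (Function.uncurry fun (h₂ h : ℝ) =>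
        (Ioi h₂).indicator (fun h => ENNReal.ofReal (phi c h)) h)
        = ({p : ℝ × ℝ | p.1 < p.2}).indicator
            (fun p => ENNReal.ofReal (phi c p.2)) := by
      funext p
      rcases p with ⟨h₂, h⟩
      by_cases hp : h₂ < h
      · simp [Function.uncurry, indicator_of_mem, hp, mem_Ioi]
      · simp [Function.uncurry, indicator_of_notMem, hp, mem_Ioi]
    rw [this]
    exact Measurable.indicator
      ((ENNReal.measurable_ofReal.comp (phi_measurable c)).comp measurable_snd)
      (measurableSet_lt measurable_fst measurable_snd)
  calc (∫ h₂ in Ioi (0:ℝ), T h₂)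
      = (∫⁻ h₂ in Ioi (0:ℝ), ENNReal.ofReal (T h₂)).toReal := by
        rw [integral_eq_lintegral_of_nonneg_ae
          (Filter.Eventually.of_forall fun h₂ => hT_nonneg h₂)
          hT_meas.aestronglyMeasurable.restrict]
    _ = (∫⁻ h₂ in Ioi (0:ℝ), ∫⁻ h : ℝ,
          (Ioi h₂).indicator (fun h => ENNReal.ofReal (phi c h)) h).toReal := by
        congr 1
        refine lintegral_congr fun h₂ => ?_
        rw [key h₂, ← lintegral_indicator measurableSet_Ioi]
    _ = (∫⁻ h : ℝ, ∫⁻ h₂ in Ioi (0:ℝ),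
          (Ioi h₂).indicator (fun h => ENNReal.ofReal (phi c h)) h).toReal := by
        congr 1
        exact lintegral_lintegral_swap hmeas2.aemeasurable
    _ = (∫⁻ h : ℝ, ENNReal.ofReal (phi c h) * volume (Ioo (0:ℝ) h)).toReal := by
        congr 1
        refine lintegral_congr fun h => ?_
        have e : ∀ h₂ : ℝ, (Ioi h₂).indicator (fun h => ENNReal.ofReal (phi c h)) h
            = (Iio h).indicator (fun _ => ENNReal.ofReal (phi c h)) h₂ := by
          intro h₂
          by_cases hp : h₂ < h
          · rw [indicator_of_mem (mem_Ioi.mpr hp), indicator_of_mem (mem_Iio.mpr hp)]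
          · rw [indicator_of_notMem (by simpa using hp),
              indicator_of_notMem (by simpa using hp)]
        calc (∫⁻ h₂ in Ioi (0:ℝ), (Ioi h₂).indicator (fun h => ENNReal.ofReal (phi c h)) h)
            = ∫⁻ h₂ in Ioi (0:ℝ), (Iio h).indicator
                (fun _ => ENNReal.ofReal (phi c h)) h₂ := lintegral_congr fun h₂ => e h₂
          _ = ENNReal.ofReal (phi c h) * volume (Ioo (0:ℝ) h) := by
              rw [lintegral_indicator_const measurableSet_Iio,
                Measure.restrict_apply measurableSet_Iio, Iio_inter_Ioi]
    _ = (∫⁻ h : ℝ, (Ioi (0:ℝ)).indicator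
          (fun h => ENNReal.ofReal (h * phi c h)) h).toReal := by
        congr 1
        refine lintegral_congr fun h => ?_
        rcases le_or_gt h 0 with hl | hl
        · rw [indicator_of_notMem (by simpa using hl), Ioo_eq_empty (by linarith),
            measure_empty, mul_zero]
        · rw [indicator_of_mem (mem_Ioi.mpr hl), Real.volume_Ioo, sub_zero,
            ← ENNReal.ofReal_mul (phi_nonneg hc h)]
          ring_nf
    _ = (∫⁻ h in Ioi (0:ℝ), ENNReal.ofReal (h * phi c h)).toReal := by
        rw [lintegral_indicator measurableSet_Ioi]
    _ = ∫ h in Ioi (0:ℝ), h * phi c h := by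
        have hnn : 0 ≤ᵐ[volume.restrict (Ioi 0)] fun h : ℝ => h * phi c h :=
          (ae_restrict_iff' measurableSet_Ioi).mpr (Filter.Eventually.of_forall
            fun h hh => mul_nonneg (le_of_lt hh) (phi_nonneg hc h))
        rw [← ofReal_integral_eq_lintegral_ofReal (hphi_integrable hc).integrableOn hnn,
          ENNReal.toReal_ofReal (setIntegral_nonneg measurableSet_Ioi fun h hh =>
            mul_nonneg (le_of_lt hh) (phi_nonneg hc h))]

lemma exp_half_int {c : ℝ} (hc : 0 < c) :
    Integrable (fun x : ℝ => Real.exp (-(c/2 * x ^ 2))) := by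
  have h := gauss_int (half_pos hc) 0
  simpa using h

lemma tail_integrable {c : ℝ} (hc : 0 < c) :
    IntegrableOn (fun h₂ : ℝ => ∫ h in Ioi h₂, phi c h) (Ioi 0) := by
  have hc2 : 0 < c/2 := half_pos hc
  set T : ℝ → ℝ := fun h₂ => ∫ h in Ioi h₂, phi c h with hT_def
  have hT_nonneg : ∀ h₂, 0 ≤ T h₂ := fun h₂ =>
    setIntegral_nonneg measurableSet_Ioi fun h _ => phi_nonneg hc h
  have hT_anti : Antitone T := by
    intro x y hxy
    exact setIntegral_mono_set (phi_integrable hc).integrableOn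
      (Filter.Eventually.of_forall fun h => phi_nonneg hc h)
      (HasSubset.Subset.eventuallyLE (Ioi_subset_Ioi hxy))
  set bfun : ℝ → ℝ := fun h => (Real.sqrt Real.pi * (c ^ (-(3:ℝ)/2) / 2))
      * (h ^ 0 * Real.exp (-(c/2 * h ^ 2)))
      + (Real.sqrt Real.pi * c ^ (-(1:ℝ)/2)) * (h ^ 2 * Real.exp (-(c/2 * h ^ 2)))
    with hbfun_def
  have hbfun_int : Integrable bfun :=
    ((gauss_int hc2 0).const_mul _).add ((gauss_int hc2 2).const_mul _)
  have hbfun_nonneg : ∀ h, 0 ≤ bfun h := fun h => by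
    have h1 : (0:ℝ) < c ^ (-(3:ℝ)/2) := Real.rpow_pos_of_pos hc _
    have h2 : (0:ℝ) < c ^ (-(1:ℝ)/2) := Real.rpow_pos_of_pos hc _
    simp only [hbfun_def, pow_zero, one_mul]
    positivity
  set Cst : ℝ := ∫ h in Ioi (0:ℝ), bfun h with hCst_def
  have hpoint : ∀ h₂ ∈ Ioi (0:ℝ), ∀ h ∈ Ioi h₂,
      phi c h ≤ Real.exp (-(c/2 * h₂ ^ 2)) * bfun h := by
    intro h₂ hh₂ h hh
    have hh₂' : (0:ℝ) < h₂ := hh₂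
    have hh' : h₂ < h := hh
    have hexp : Real.exp (-(c * h ^ 2))
        ≤ Real.exp (-(c/2 * h₂ ^ 2)) * Real.exp (-(c/2 * h ^ 2)) := by
      rw [← Real.exp_add]
      apply Real.exp_le_exp.mpr
      have hsq : h₂ ^ 2 ≤ h ^ 2 := by nlinarith
      nlinarith [mul_le_mul_of_nonneg_left hsq hc2.le]
    have hA : (0:ℝ) ≤ Real.sqrt Real.pi
        * (c ^ (-(3:ℝ)/2) / 2 + h ^ 2 * c ^ (-(1:ℝ)/2)) := by
      have h1 : (0:ℝ) < c ^ (-(3:ℝ)/2) := Real.rpow_pos_of_pos hc _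
      have h2 : (0:ℝ) < c ^ (-(1:ℝ)/2) := Real.rpow_pos_of_pos hc _
      positivity
    calc phi c h = (Real.sqrt Real.pi * (c ^ (-(3:ℝ)/2) / 2 + h ^ 2 * c ^ (-(1:ℝ)/2)))
          * Real.exp (-(c * h ^ 2)) := by unfold phi; ring
      _ ≤ (Real.sqrt Real.pi * (c ^ (-(3:ℝ)/2) / 2 + h ^ 2 * c ^ (-(1:ℝ)/2)))
          * (Real.exp (-(c/2 * h₂ ^ 2)) * Real.exp (-(c/2 * h ^ 2))) :=
        mul_le_mul_of_nonneg_left hexp hA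
      _ = Real.exp (-(c/2 * h₂ ^ 2)) * bfun h := by
        simp only [hbfun_def, pow_zero, one_mul]; ring
  have hTle : ∀ h₂ ∈ Ioi (0:ℝ), T h₂ ≤ Real.exp (-(c/2 * h₂ ^ 2)) * Cst := by
    intro h₂ hh₂
    have h1 : T h₂ ≤ ∫ h in Ioi h₂, Real.exp (-(c/2 * h₂ ^ 2)) * bfun h := by
      refine setIntegral_mono_on (phi_integrable hc).integrableOn
        ((hbfun_int.const_mul _).integrableOn) measurableSet_Ioi ?_
      intro h hh
      exact hpoint h₂ hh₂ h hh
    have h2 : (∫ h in Ioi h₂, Real.exp (-(c/2 * h₂ ^ 2)) * bfun h)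
        = Real.exp (-(c/2 * h₂ ^ 2)) * ∫ h in Ioi h₂, bfun h := integral_const_mul _ _
    have h3 : (∫ h in Ioi h₂, bfun h) ≤ Cst := by
      refine setIntegral_mono_set hbfun_int.integrableOn
        (Filter.Eventually.of_forall fun h => hbfun_nonneg h)
        (HasSubset.Subset.eventuallyLE (Ioi_subset_Ioi (le_of_lt hh₂)))
    calc T h₂ ≤ _ := h1
      _ = _ := h2
      _ ≤ Real.exp (-(c/2 * h₂ ^ 2)) * Cst :=
        mul_le_mul_of_nonneg_left h3 (Real.exp_nonneg _)
  refine Integrable.mono' (((exp_half_int hc).mul_const Cst).integrableOn)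
    hT_anti.measurable.aestronglyMeasurable.restrict ?_
  refine (ae_restrict_iff' measurableSet_Ioi).mpr (Filter.Eventually.of_forall ?_)
  intro h₂ hh₂
  rw [Real.norm_of_nonneg (hT_nonneg h₂)]
  exact hTle h₂ hh₂

lemma outer {c : ℝ} (hc : 0 < c) :
    (∫ h₂ in Ioi (0:ℝ), (h₂ * phi c h₂ + ∫ h in Ioi h₂, phi c h))
      = 2 * ∫ h in Ioi (0:ℝ), h * phi c h := by
  rw [integral_add ((hphi_integrable hc).integrableOn) (tail_integrable hc), swap_tail hc]
  ring

lemma triple {c : ℝ} (hc : 0 < c) :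
    (∫ h₂ in Ioi (0:ℝ), ∫ h₁ in Ioi (0:ℝ), ∫ t in Ioi (0:ℝ),
        Qf t h₁ h₂ * Real.exp (-(c * Qf t h₁ h₂)))
      = 3/2 * Real.sqrt Real.pi * c ^ (-(5:ℝ)/2) := by
  rw [setIntegral_congr_fun measurableSet_Ioi
    (fun h₂ hh₂ => middle hc hh₂ : EqOn _
      (fun h₂ => h₂ * phi c h₂ + ∫ h in Ioi h₂, phi c h) _),
    outer hc, hphi_val hc]
  ring

end Stmt8Aux

open Stmt8Aux

/-- For all `λ > 0` and `γ ≥ 0`,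
`(2λ^{3/2}π/3) ∫₀^∞∫₀^∞∫₀^∞ λπ ĥ(t,h₁,h₂)² e^{−(γ+λπ) ĥ(t,h₁,h₂)²} dt dh₁ dh₂
  = (1 + γ/(λπ))^{−5/2}`,
where `ĥ(t,h₁,h₂)² = (1/4)[t² + 2(h₁² + h₂²) + (h₂² − h₁²)²/t²]`.  Equivalently, the Palm
distribution of the typical tropical-interference handover distance is Nakagami with
parameters `(5/2, 5/(2λπ))`. -/
theorem stmt_8 (lam γ : ℝ) (hlam : 0 < lam) (hγ : 0 ≤ γ) :
    2 * lam ^ ((3:ℝ)/2) * Real.pi / 3 *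
        ∫ h₂ in Ioi (0:ℝ), ∫ h₁ in Ioi (0:ℝ), ∫ t in Ioi (0:ℝ),
          lam * Real.pi *
              (1/4 * (t ^ 2 + 2 * (h₁ ^ 2 + h₂ ^ 2) + (h₂ ^ 2 - h₁ ^ 2) ^ 2 / t ^ 2)) *
            Real.exp (-((γ + lam * Real.pi) *
              (1/4 * (t ^ 2 + 2 * (h₁ ^ 2 + h₂ ^ 2) + (h₂ ^ 2 - h₁ ^ 2) ^ 2 / t ^ 2)))) =
      (1 + γ / (lam * Real.pi)) ^ (-(5:ℝ)/2) := by
  have hπ := Real.pi_pos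
  have hlp : 0 < lam * Real.pi := by positivity
  set c : ℝ := γ + lam * Real.pi with hc_def
  have hc : 0 < c := by positivity
  have ht := triple hc
  unfold Qf at ht
  simp only [mul_assoc]
  simp only [mul_assoc] at ht
  simp_rw [integral_const_mul]
  simp_rw [integral_const_mul] at ht
  rw [show (-(5:ℝ)/2) = -((5:ℝ)/2) by norm_num] at ht ⊢
  rw [ht]
  have hrhs : 1 + γ / (lam * Real.pi) = c / (lam * Real.pi) := by
    rw [hc_def]; field_simp; ring
  rw [hrhs, Real.div_rpow hc.le hlp.le,
    Real.rpow_neg hlp.le, div_inv_eq_mul, Real.mul_rpow hlam.le hπ.le]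
  have hl : lam ^ ((3:ℝ)/2) * lam = lam ^ ((5:ℝ)/2) := by
    rw [show (5:ℝ)/2 = (3:ℝ)/2 + 1 by norm_num, Real.rpow_add hlam, Real.rpow_one]
  have hp2 : Real.pi ^ 2 * Real.sqrt Real.pi = Real.pi ^ ((5:ℝ)/2) := by
    rw [Real.sqrt_eq_rpow, ← Real.rpow_natCast Real.pi 2, ← Real.rpow_add hπ]
    norm_num
  linear_combination (c ^ (-((5:ℝ)/2)) * Real.pi ^ 2 * Real.sqrt Real.pi) * hl
    + (c ^ (-((5:ℝ)/2)) * lam ^ ((5:ℝ)/2)) * hp2
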